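/- With M, h, c₀,…,c₄, the automorphisms σ_I, and the subgroup G = ⟨σ_{{0,1}}, σ_{{2,3}}, σ_{{2,4}}⟩ as in the context, the first group cohomology H¹(G, M) of G with coefficients in the G-module M is isomorphic to ℤ/2ℤ. -/

import Mathlib

open scoped Matrix

/-- Basis index for `M = ℤ⁶`: `none ↦ e`, `some i ↦ cᵢ`. -/
abbrev Idx := Option (Fin 5)

/-- `M = ℤ⁶`, the free abelian group on `e, c₀, …, c₄`, as coordinate vectors. -/
abbrev Mlat := Idx → ℤ

/-- The coordinate vector of `h = 2e − (c₀ + c₁ + c₂ + c₃ + c₄)`. -/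
def hvec : Mlat := fun r => match r with | none => 2 | some _ => -1

/-- The coordinate vector of the basis element `cᵢ`. -/
def cvec (i : Fin 5) : Mlat := Pi.single (some i) 1

/-- The matrix of the automorphism `σ_I` of `M = ℤ⁶` (in the basis `e, c₀, …, c₄`):
`σ_I` fixes `h = 2e − Σᵢcᵢ`, sends `cᵢ ↦ h − cᵢ` for `i ∈ I`, fixes `cᵢ` for `i ∉ I`,
and sends `e ↦ e + (|I|/2)·h − Σ_{i∈I} cᵢ`. Columns are the images of the basis
vectors. -/
def sigmaMat (I : Finset (Fin 5)) : Matrix Idx Idx ℤ :=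
  Matrix.of fun r c =>
    match c with
    | none =>
      match r with
      | none => 1 + I.card
      | some j => -((I.card : ℤ) / 2) - (if j ∈ I then 1 else 0)
    | some i =>
      if i ∈ I then
        match r with
        | none => 2
        | some j => if j = i then -2 else -1
      else
        match r with
        | none => 0
        | some j => if j = i then 1 else 0

/-- `σ_{{0,1}}` as an automorphism (invertible matrix) of `M`. -/
def g01 : (Matrix Idx Idx ℤ)ˣ := ⟨sigmaMat {0, 1}, sigmaMat {0, 1}, by decide, by decide⟩

/-- `σ_{{2,3}}` as an automorphism of `M`. -/
def g23 : (Matrix Idx Idx ℤ)ˣ := ⟨sigmaMat {2, 3}, sigmaMat {2, 3}, by decide, by decide⟩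

/-- `σ_{{2,4}}` as an automorphism of `M`. -/
def g24 : (Matrix Idx Idx ℤ)ˣ := ⟨sigmaMat {2, 4}, sigmaMat {2, 4}, by decide, by decide⟩

/-- `G = ⟨σ_{{0,1}}, σ_{{2,3}}, σ_{{2,4}}⟩ ⊆ Aut(M)`. -/
def Ggrp : Subgroup (Matrix Idx Idx ℤ)ˣ := Subgroup.closure {g01, g23, g24}

/-- The tautological representation of `G` on `M = ℤ⁶`. -/
noncomputable def rhoG : Representation ℤ (↥Ggrp) Mlat :=
  (Matrix.toLinAlgEquiv'.toAlgHom.toMonoidHom.comp (Units.coeHom (Matrix Idx Idx ℤ))).comp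
    Ggrp.subtype

/-- `M` as a `ℤ`-linear representation of `G`. -/
noncomputable def Mrep : Rep ℤ (↥Ggrp) := Rep.of rhoG



open groupCohomology

namespace H1Aux

/-- `σ_{{0,1}}` as an element of `G`. -/
def aG : ↥Ggrp := ⟨g01, Subgroup.subset_closure (by simp)⟩
/-- `σ_{{2,3}}` as an element of `G`. -/
def bG : ↥Ggrp := ⟨g23, Subgroup.subset_closure (by simp)⟩
/-- `σ_{{2,4}}` as an element of `G`. -/
def cG : ↥Ggrp := ⟨g24, Subgroup.subset_closure (by simp)⟩

/-- Values of cochains, retyped to land in `Mlat`. -/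
def fv (f : ↥Ggrp → CoeSort.coe Mrep) (g : ↥Ggrp) : Mlat := f g

lemma rho_apply (g : ↥Ggrp) (v : Mlat) :
    Mrep.ρ g v = Matrix.mulVec (g.1 : Matrix Idx Idx ℤ) v := rfl

lemma aG_mat : (aG.1 : Matrix Idx Idx ℤ) = sigmaMat {0,1} := rfl
lemma bG_mat : (bG.1 : Matrix Idx Idx ℤ) = sigmaMat {2,3} := rfl
lemma cG_mat : (cG.1 : Matrix Idx Idx ℤ) = sigmaMat {2,4} := rfl

lemma coe_add_apply (f g : cocycles₁ Mrep) (u : ↥Ggrp) (i : Idx) :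
    (⇑(f + g) : ↥Ggrp → CoeSort.coe Mrep) u i = (⇑f) u i + (⇑g) u i := rfl

lemma coe_zero_apply (u : ↥Ggrp) (i : Idx) :
    (⇑(0 : cocycles₁ Mrep) : ↥Ggrp → CoeSort.coe Mrep) u i = 0 := rfl

lemma aa : aG * aG = 1 := by
  apply Subtype.ext; apply Units.ext
  show (sigmaMat {0,1} * sigmaMat {0,1} : Matrix Idx Idx ℤ) = 1
  decide

lemma bb : bG * bG = 1 := by
  apply Subtype.ext; apply Units.ext
  show (sigmaMat {2,3} * sigmaMat {2,3} : Matrix Idx Idx ℤ) = 1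
  decide

lemma cc : cG * cG = 1 := by
  apply Subtype.ext; apply Units.ext
  show (sigmaMat {2,4} * sigmaMat {2,4} : Matrix Idx Idx ℤ) = 1
  decide

lemma abba : aG * bG = bG * aG := by
  apply Subtype.ext; apply Units.ext
  show (sigmaMat {0,1} * sigmaMat {2,3} : Matrix Idx Idx ℤ) = sigmaMat {2,3} * sigmaMat {0,1}
  decide

lemma acca : aG * cG = cG * aG := by
  apply Subtype.ext; apply Units.ext
  show (sigmaMat {0,1} * sigmaMat {2,4} : Matrix Idx Idx ℤ) = sigmaMat {2,4} * sigmaMat {0,1}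
  decide

lemma bccb : bG * cG = cG * bG := by
  apply Subtype.ext; apply Units.ext
  show (sigmaMat {2,3} * sigmaMat {2,4} : Matrix Idx Idx ℤ) = sigmaMat {2,4} * sigmaMat {2,3}
  decide

lemma mem_coboundaries₁_iff' (f : cocycles₁ Mrep) :
    ⇑f ∈ coboundaries₁ Mrep ↔ ∃ x : CoeSort.coe Mrep, ∀ g : ↥Ggrp, Mrep.ρ g x - x = f g := by
  constructor
  · rintro ⟨x, hx⟩
    exact ⟨x, fun g => congrFun hx g⟩
  · rintro ⟨x, hx⟩
    exact ⟨x, funext hx⟩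

/-- The additive map `Z¹(G,M) → ℤ/2` given by the parity of selected coordinates of the
values at the generators `σ_{{0,1}}` and `σ_{{2,3}}`. -/
noncomputable def phi0 : (cocycles₁ Mrep) →+ ZMod 2 where
  toFun f := (((fv (⇑f) aG (some 0) + fv (⇑f) aG (some 2)
      + fv (⇑f) bG (some 0) + fv (⇑f) bG (some 2) : ℤ)) : ZMod 2)
  map_zero' := by
    simp only [fv, coe_zero_apply]
    norm_num
  map_add' f g := by
    simp only [fv, coe_add_apply]
    push_cast
    ring

noncomputable def phi : (cocycles₁ Mrep) →ₗ[ℤ] ZMod 2 := phi0.toIntLinearMap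

/-- The witness generating `H¹` as a "half coboundary". -/
def v6 : Mlat := fun r => match r with
  | some 0 => -1
  | some 1 => -1
  | _ => 0

/-- `Nv g = g • v6 - v6`. -/
def Nv (g : ↥Ggrp) : Mlat := Matrix.mulVec (g.1 : Matrix Idx Idx ℤ) v6 - v6

lemma Nv_mul (g h : ↥Ggrp) :
    Nv (g * h) = Matrix.mulVec (g.1 : Matrix Idx Idx ℤ) (Nv h) + Nv g := by
  show ((g.1 : Matrix Idx Idx ℤ) * (h.1 : Matrix Idx Idx ℤ)) *ᵥ v6 - v6 = _
  rw [← Matrix.mulVec_mulVec, Nv, Nv, Matrix.mulVec_sub]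
  abel

lemma Nv_even (g : ↥Ggrp) : ∀ i, 2 ∣ Nv g i := by
  have main : ∀ u : (Matrix Idx Idx ℤ)ˣ, u ∈ Ggrp →
      ∀ i, 2 ∣ (Matrix.mulVec (u : Matrix Idx Idx ℤ) v6 - v6) i := by
    intro u hu
    induction hu using Subgroup.closure_induction with
    | mem x hx =>
      rcases hx with h | h | h <;> subst h <;>
        · intro i
          rw [Int.dvd_iff_emod_eq_zero]
          revert i; decide
    | one =>
      intro i
      simp [Matrix.one_mulVec]
    | mul x y hx hy px py =>
      intro i
      have hsplit : ((↑(x * y) : Matrix Idx Idx ℤ)) *ᵥ v6 - v6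
          = (x : Matrix Idx Idx ℤ) *ᵥ ((y : Matrix Idx Idx ℤ) *ᵥ v6 - v6)
            + ((x : Matrix Idx Idx ℤ) *ᵥ v6 - v6) := by
        rw [Units.val_mul, ← Matrix.mulVec_mulVec, Matrix.mulVec_sub]
        abel
      rw [hsplit, Pi.add_apply]
      refine dvd_add ?_ (px i)
      show 2 ∣ ∑ j, (x : Matrix Idx Idx ℤ) i j * ((y : Matrix Idx Idx ℤ) *ᵥ v6 - v6) j
      exact Finset.dvd_sum fun j _ => Dvd.dvd.mul_left (py j) _
    | inv x hx px =>
      intro i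
      have hsplit : ((↑(x⁻¹) : Matrix Idx Idx ℤ)) *ᵥ v6 - v6
          = -((↑(x⁻¹) : Matrix Idx Idx ℤ) *ᵥ ((x : Matrix Idx Idx ℤ) *ᵥ v6 - v6)) := by
        rw [Matrix.mulVec_sub, Matrix.mulVec_mulVec, Units.inv_mul, Matrix.one_mulVec]
        abel
      rw [hsplit, Pi.neg_apply, dvd_neg]
      show 2 ∣ ∑ j, (↑(x⁻¹) : Matrix Idx Idx ℤ) i j * ((x : Matrix Idx Idx ℤ) *ᵥ v6 - v6) j
      exact Finset.dvd_sum fun j _ => Dvd.dvd.mul_left (px j) _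
  exact main g.1 g.2

/-- The generating cocycle: the "half coboundary" of `v6`. -/
def f0 : ↥Ggrp → Mlat := fun g i => Nv g i / 2

lemma two_f0 (g : ↥Ggrp) (i : Idx) : 2 * f0 g i = Nv g i :=
  Int.mul_ediv_cancel' (Nv_even g i)

lemma f0_mem : (f0 : ↥Ggrp → CoeSort.coe Mrep) ∈ cocycles₁ Mrep := by
  refine (mem_cocycles₁_iff (A := Mrep) f0).2 ?_
  intro g h
  funext i
  show f0 (g * h) i = ((g.1 : Matrix Idx Idx ℤ) *ᵥ (f0 h)) i + f0 g i
  have t1 : 2 * (((g.1 : Matrix Idx Idx ℤ) *ᵥ (f0 h)) i)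
      = ((g.1 : Matrix Idx Idx ℤ) *ᵥ (Nv h)) i := by
    show 2 * ∑ j, (g.1 : Matrix Idx Idx ℤ) i j * f0 h j
        = ∑ j, (g.1 : Matrix Idx Idx ℤ) i j * Nv h j
    rw [Finset.mul_sum]
    exact Finset.sum_congr rfl fun j _ => by rw [mul_left_comm, two_f0]
  refine mul_left_cancel₀ (two_ne_zero (α := ℤ)) ?_
  calc 2 * f0 (g * h) i = Nv (g * h) i := two_f0 _ _
    _ = ((g.1 : Matrix Idx Idx ℤ) *ᵥ (Nv h)) i + Nv g i := by rw [Nv_mul g h]; rfl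
    _ = 2 * (((g.1 : Matrix Idx Idx ℤ) *ᵥ (f0 h)) i) + 2 * f0 g i := by rw [t1, two_f0]
    _ = 2 * (((g.1 : Matrix Idx Idx ℤ) *ᵥ (f0 h)) i + f0 g i) := by ring

/-- `f0` as a cocycle. -/
def f0c : cocycles₁ Mrep := ⟨f0, f0_mem⟩

lemma phi_f0 : phi f0c = 1 := by
  have h1 : fv (⇑f0c) aG (some 0) = 2 := by decide
  have h2 : fv (⇑f0c) aG (some 2) = 1 := by decide
  have h3 : fv (⇑f0c) bG (some 0) = 0 := by decide
  have h4 : fv (⇑f0c) bG (some 2) = 0 := by decide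
  show (((fv (⇑f0c) aG (some 0) + fv (⇑f0c) aG (some 2)
      + fv (⇑f0c) bG (some 0) + fv (⇑f0c) bG (some 2) : ℤ)) : ZMod 2) = 1
  rw [h1, h2, h3, h4]
  decide

/-- The explicit primitive for a parity-zero cocycle with generator values `x, y, z`. -/
def mwit (x y z : Mlat) (s : ℤ) : Mlat := fun r =>
  if r = some 0 then x (some 2) + y (some 0) + z (some 0) - s
  else if r = some 1 then x (some 0) - x (some 2) + y (some 0) + z (some 0) - s
  else if r = some 2 then x (some 0) + x (some 2) + 2*y (some 0) + z (some 0) - 2*s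
  else if r = some 3 then -y (some 0) + z (some 0)
  else if r = some 4 then 0
  else -x (some 0) - x (some 2) - 2*y (some 0) - 2*z (some 0) + 2*s


set_option maxHeartbeats 3200000 in
lemma phi_vanish : ∀ f : cocycles₁ Mrep, ⇑f ∈ coboundaries₁ Mrep → f ∈ LinearMap.ker phi := by
  intro f hf
  rw [mem_coboundaries₁_iff'] at hf
  obtain ⟨x, hx⟩ := hf
  have ha : (Matrix.mulVec (sigmaMat {0,1}) (fun i => x i) - (fun i => x i) : Mlat)
      = fv (⇑f) aG := hx aG
  have hb : (Matrix.mulVec (sigmaMat {2,3}) (fun i => x i) - (fun i => x i) : Mlat)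
      = fv (⇑f) bG := hx bG
  have e1 := congrFun ha (some 0)
  have e2 := congrFun ha (some 2)
  have e3 := congrFun hb (some 0)
  have e4 := congrFun hb (some 2)
  simp [fv, sigmaMat, Matrix.of_apply, Matrix.mulVec, dotProduct, Fintype.sum_option, Fin.sum_univ_five, Pi.add_apply, Pi.sub_apply, Pi.zero_apply, Finset.mem_insert, Finset.mem_singleton] at e1 e2 e3 e4
  rw [LinearMap.mem_ker]
  show (((fv (⇑f) aG (some 0) + fv (⇑f) aG (some 2)
      + fv (⇑f) bG (some 0) + fv (⇑f) bG (some 2) : ℤ)) : ZMod 2) = 0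
  rw [ZMod.intCast_zmod_eq_zero_iff_dvd]
  simp only [fv]
  push_cast
  omega

set_option maxHeartbeats 3200000 in
lemma ker_phi_le : ∀ f : cocycles₁ Mrep, f ∈ LinearMap.ker phi → ⇑f ∈ coboundaries₁ Mrep := by
  intro f hf
  rw [LinearMap.mem_ker] at hf
  have hf' : (((fv (⇑f) aG (some 0) + fv (⇑f) aG (some 2)
      + fv (⇑f) bG (some 0) + fv (⇑f) bG (some 2) : ℤ)) : ZMod 2) = 0 := hf
  rw [ZMod.intCast_zmod_eq_zero_iff_dvd] at hf'
  obtain ⟨s, hs⟩ := hf'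
  simp only [fv] at hs
  have hco := fun g h => (mem_cocycles₁_iff (A := Mrep) (⇑f)).1 f.2 g h
  have hA' := hco aG aG
  rw [aa, cocycles₁_map_one f] at hA'
  have hB' := hco bG bG
  rw [bb, cocycles₁_map_one f] at hB'
  have hC' := hco cG cG
  rw [cc, cocycles₁_map_one f] at hC'
  have hAB' := hco aG bG
  rw [abba, hco bG aG] at hAB'
  have hAC' := hco aG cG
  rw [acca, hco cG aG] at hAC'
  have hBC' := hco bG cG
  rw [bccb, hco cG bG] at hBC'
  have hA : (0:Mlat) = Matrix.mulVec (sigmaMat {0,1}) (fv (⇑f) aG) + fv (⇑f) aG := hA'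
  have hB : (0:Mlat) = Matrix.mulVec (sigmaMat {2,3}) (fv (⇑f) bG) + fv (⇑f) bG := hB'
  have hC : (0:Mlat) = Matrix.mulVec (sigmaMat {2,4}) (fv (⇑f) cG) + fv (⇑f) cG := hC'
  have hAB : (Matrix.mulVec (sigmaMat {2,3}) (fv (⇑f) aG) + fv (⇑f) bG : Mlat)
      = Matrix.mulVec (sigmaMat {0,1}) (fv (⇑f) bG) + fv (⇑f) aG := hAB'
  have hAC : (Matrix.mulVec (sigmaMat {2,4}) (fv (⇑f) aG) + fv (⇑f) cG : Mlat)
      = Matrix.mulVec (sigmaMat {0,1}) (fv (⇑f) cG) + fv (⇑f) aG := hAC'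
  have hBC : (Matrix.mulVec (sigmaMat {2,4}) (fv (⇑f) bG) + fv (⇑f) cG : Mlat)
      = Matrix.mulVec (sigmaMat {2,3}) (fv (⇑f) cG) + fv (⇑f) bG := hBC'
  clear hA' hB' hC' hAB' hAC' hBC'
  have qA0 := congrFun hA none
  have qA1 := congrFun hA (some 0)
  have qA2 := congrFun hA (some 1)
  have qA3 := congrFun hA (some 2)
  have qA4 := congrFun hA (some 3)
  have qA5 := congrFun hA (some 4)
  have qB0 := congrFun hB none
  have qB1 := congrFun hB (some 0)
  have qB2 := congrFun hB (some 1)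
  have qB3 := congrFun hB (some 2)
  have qB4 := congrFun hB (some 3)
  have qB5 := congrFun hB (some 4)
  have qC0 := congrFun hC none
  have qC1 := congrFun hC (some 0)
  have qC2 := congrFun hC (some 1)
  have qC3 := congrFun hC (some 2)
  have qC4 := congrFun hC (some 3)
  have qC5 := congrFun hC (some 4)
  have qAB0 := congrFun hAB none
  have qAB1 := congrFun hAB (some 0)
  have qAB2 := congrFun hAB (some 1)
  have qAB3 := congrFun hAB (some 2)
  have qAB4 := congrFun hAB (some 3)
  have qAB5 := congrFun hAB (some 4)
  have qAC0 := congrFun hAC none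
  have qAC1 := congrFun hAC (some 0)
  have qAC2 := congrFun hAC (some 1)
  have qAC3 := congrFun hAC (some 2)
  have qAC4 := congrFun hAC (some 3)
  have qAC5 := congrFun hAC (some 4)
  have qBC0 := congrFun hBC none
  have qBC1 := congrFun hBC (some 0)
  have qBC2 := congrFun hBC (some 1)
  have qBC3 := congrFun hBC (some 2)
  have qBC4 := congrFun hBC (some 3)
  have qBC5 := congrFun hBC (some 4)
  simp only [Pi.add_apply] at qA0 qA1 qA2 qA3 qA4 qA5 qB0 qB1 qB2 qB3 qB4 qB5 qC0 qC1 qC2 qC3 qC4 qC5 qAB0 qAB1 qAB2 qAB3 qAB4 qAB5 qAC0 qAC1 qAC2 qAC3 qAC4 qAC5 qBC0 qBC1 qBC2 qBC3 qBC4 qBC5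
  simp [fv, sigmaMat, Matrix.of_apply, Matrix.mulVec, dotProduct, Fintype.sum_option, Fin.sum_univ_five, Pi.add_apply, Pi.sub_apply, Pi.zero_apply, Finset.mem_insert, Finset.mem_singleton] at qA0 qA1 qA2 qA3 qA4 qA5 qB0 qB1 qB2 qB3 qB4 qB5 qC0 qC1 qC2 qC3 qC4 qC5 qAB0 qAB1 qAB2 qAB3 qAB4 qAB5 qAC0 qAC1 qAC2 qAC3 qAC4 qAC5 qBC0 qBC1 qBC2 qBC3 qBC4 qBC5
  set mm : CoeSort.coe Mrep := mwit (fv (⇑f) aG) (fv (⇑f) bG) (fv (⇑f) cG) s with hmm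
  have genA : Mrep.ρ aG mm - mm = (⇑f) aG := by
    funext r
    show (∑ j, sigmaMat {0,1} r j * mm j) - mm r = (⇑f) aG r
    rcases r with _ | i
    · simp [fv, sigmaMat, Matrix.of_apply, Matrix.mulVec, dotProduct, Fintype.sum_option, Fin.sum_univ_five, Pi.add_apply, Pi.sub_apply, Pi.zero_apply, Finset.mem_insert, Finset.mem_singleton, mwit, hmm]
      omega
    · fin_cases i <;> (simp [fv, sigmaMat, Matrix.of_apply, Matrix.mulVec, dotProduct, Fintype.sum_option, Fin.sum_univ_five, Pi.add_apply, Pi.sub_apply, Pi.zero_apply, Finset.mem_insert, Finset.mem_singleton, mwit, hmm]; omega)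
  have genB : Mrep.ρ bG mm - mm = (⇑f) bG := by
    funext r
    show (∑ j, sigmaMat {2,3} r j * mm j) - mm r = (⇑f) bG r
    rcases r with _ | i
    · simp [fv, sigmaMat, Matrix.of_apply, Matrix.mulVec, dotProduct, Fintype.sum_option, Fin.sum_univ_five, Pi.add_apply, Pi.sub_apply, Pi.zero_apply, Finset.mem_insert, Finset.mem_singleton, mwit, hmm]
      omega
    · fin_cases i <;> (simp [fv, sigmaMat, Matrix.of_apply, Matrix.mulVec, dotProduct, Fintype.sum_option, Fin.sum_univ_five, Pi.add_apply, Pi.sub_apply, Pi.zero_apply, Finset.mem_insert, Finset.mem_singleton, mwit, hmm]; omega)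
  have genC : Mrep.ρ cG mm - mm = (⇑f) cG := by
    funext r
    show (∑ j, sigmaMat {2,4} r j * mm j) - mm r = (⇑f) cG r
    rcases r with _ | i
    · simp [fv, sigmaMat, Matrix.of_apply, Matrix.mulVec, dotProduct, Fintype.sum_option, Fin.sum_univ_five, Pi.add_apply, Pi.sub_apply, Pi.zero_apply, Finset.mem_insert, Finset.mem_singleton, mwit, hmm]
      omega
    · fin_cases i <;> (simp [fv, sigmaMat, Matrix.of_apply, Matrix.mulVec, dotProduct, Fintype.sum_option, Fin.sum_univ_five, Pi.add_apply, Pi.sub_apply, Pi.zero_apply, Finset.mem_insert, Finset.mem_singleton, mwit, hmm]; omega)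
  rw [mem_coboundaries₁_iff']
  refine ⟨mm, ?_⟩
  intro g
  have key : ∀ (u : (Matrix Idx Idx ℤ)ˣ) (hu : u ∈ Ggrp),
      Mrep.ρ (⟨u, hu⟩ : ↥Ggrp) mm - mm = (⇑f) ⟨u, hu⟩ := by
    intro u hu
    induction hu using Subgroup.closure_induction with
    | mem x hx =>
      rcases hx with h | h | h <;> subst h
      · exact genA
      · exact genB
      · exact genC
    | one =>
      have h1 : (⇑f) (1 : ↥Ggrp) = 0 := cocycles₁_map_one f
      show Mrep.ρ (1 : ↥Ggrp) mm - mm = (⇑f) (1 : ↥Ggrp)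
      rw [h1, map_one]
      simp
    | mul x y hx hy px py =>
      show Mrep.ρ ((⟨x, hx⟩ : ↥Ggrp) * ⟨y, hy⟩) mm - mm = (⇑f) ((⟨x, hx⟩ : ↥Ggrp) * ⟨y, hy⟩)
      rw [hco ⟨x, hx⟩ ⟨y, hy⟩, ← px, ← py, map_mul]
      show Mrep.ρ (⟨x, hx⟩ : ↥Ggrp) (Mrep.ρ (⟨y, hy⟩ : ↥Ggrp) mm) - mm
        = Mrep.ρ (⟨x, hx⟩ : ↥Ggrp) (Mrep.ρ (⟨y, hy⟩ : ↥Ggrp) mm - mm)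
          + (Mrep.ρ (⟨x, hx⟩ : ↥Ggrp) mm - mm)
      rw [map_sub, sub_add_sub_cancel]
    | inv x hx px =>
      show Mrep.ρ ((⟨x, hx⟩ : ↥Ggrp)⁻¹) mm - mm = (⇑f) ((⟨x, hx⟩ : ↥Ggrp)⁻¹)
      have h2 := cocycles₁_map_inv f (⟨x, hx⟩ : ↥Ggrp)
      have h3 : (⇑f) ((⟨x, hx⟩ : ↥Ggrp)⁻¹)
          = - (Mrep.ρ ((⟨x, hx⟩ : ↥Ggrp)⁻¹) ((⇑f) ⟨x, hx⟩)) := by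
        have h4 := congrArg (Mrep.ρ ((⟨x, hx⟩ : ↥Ggrp)⁻¹)) h2
        rwa [← Module.End.mul_apply, ← map_mul, inv_mul_cancel, map_one, Module.End.one_apply,
          map_neg] at h4
      rw [h3, ← px, map_sub, ← Module.End.mul_apply, ← map_mul, inv_mul_cancel, map_one,
        Module.End.one_apply]
      rw [neg_sub]
  exact key g.1 g.2

end H1Aux


open H1Aux in
/-- The first group cohomology `H¹(G, M)` is isomorphic to `ℤ/2ℤ`. -/
theorem h1_iso_zmod_two : Nonempty (groupCohomology.H1 Mrep ≃+ ZMod 2) := by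
  let L : cocycles₁ Mrep →ₗ[ℤ] groupCohomology.H1 Mrep := (H1π Mrep).hom
  have hL : Function.Surjective L := (ModuleCat.epi_iff_surjective _).1 inferInstance
  have hker : LinearMap.ker L = LinearMap.ker phi := by
    ext f
    rw [LinearMap.mem_ker]
    show H1π Mrep f = 0 ↔ _
    rw [H1π_eq_zero_iff]
    exact ⟨phi_vanish f, ker_phi_le f⟩
  have hsurj : Function.Surjective phi := by
    intro t
    have ht : t = 0 ∨ t = 1 := by revert t; decide
    rcases ht with rfl | rfl
    · exact ⟨0, map_zero _⟩
    · exact ⟨f0c, phi_f0⟩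
  exact ⟨((L.quotKerEquivOfSurjective hL).symm.trans
    ((Submodule.quotEquivOfEq _ _ hker).trans (phi.quotKerEquivOfSurjective hsurj))).toAddEquiv⟩
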